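/- Let R > 0 and 0 < 2M < R, and set χ = 2M/R. Let m : [0,R] → ℝ be continuous with m(R) = M and 0 ≤ 2m(r) < r for all r ∈ (0,R], and let ζ : [0,R] → ℝ be continuous on [0,R], differentiable on (0,R), with ζ(R) = √(1−χ). Suppose that for every r ∈ (0,R) one has m(r) ≥ M r³/R³ and (1/r)·√(1−2m(r)/r)·ζ′(r) ≥ M/R³. Then ζ(0) ≤ (3/2)√(1−χ) − 1/2. -/

import Mathlib

open Real Set

theorem buchdahl_bondi_zeta_center_bound
    (R M χ : ℝ) (hR : 0 < R) (hM : 0 < 2 * M) (hMR : 2 * M < R)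
    (hχ : χ = 2 * M / R)
    (m ζ ζ' : ℝ → ℝ)
    (hm_cont : ContinuousOn m (Icc 0 R))
    (hmR : m R = M)
    (hm_bound : ∀ r ∈ Ioc (0:ℝ) R, 0 ≤ 2 * m r ∧ 2 * m r < r)
    (hζ_cont : ContinuousOn ζ (Icc 0 R))
    (hζ_deriv : ∀ r ∈ Ioo (0:ℝ) R, HasDerivAt ζ (ζ' r) r)
    (hζR : ζ R = Real.sqrt (1 - χ))
    (hm_ge : ∀ r ∈ Ioo (0:ℝ) R, m r ≥ M * r ^ 3 / R ^ 3)
    (hineq : ∀ r ∈ Ioo (0:ℝ) R,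
      (1 / r) * Real.sqrt (1 - 2 * m r / r) * ζ' r ≥ M / R ^ 3) :
    ζ 0 ≤ (3 / 2) * Real.sqrt (1 - χ) - 1 / 2 := by
  have hRne : R ≠ 0 := ne_of_gt hR
  have hχpos : 0 < χ := by rw [hχ]; positivity
  have hχlt : χ < 1 := by rw [hχ, div_lt_one hR]; linarith
  set φ : ℝ → ℝ := fun r => ζ r + Real.sqrt (1 - χ * r ^ 2 / R ^ 2) / 2 with hφdef
  have hu_pos : ∀ r ∈ Icc (0:ℝ) R, 0 < 1 - χ * r ^ 2 / R ^ 2 := by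
    rintro r ⟨h0, hR'⟩
    have hr2 : r ^ 2 ≤ R ^ 2 := by nlinarith
    have h1 : χ * r ^ 2 / R ^ 2 ≤ χ := by
      rw [div_le_iff₀ (by positivity)]
      nlinarith
    linarith
  -- derivative of φ on the interior
  have hderiv : ∀ x ∈ Ioo (0:ℝ) R,
      HasDerivAt φ (ζ' x + (-(χ * (2 * x ^ 1) / R ^ 2)) /
        (2 * Real.sqrt (1 - χ * x ^ 2 / R ^ 2)) / 2) x := by
    intro x hx
    have hu : HasDerivAt (fun r : ℝ => 1 - χ * r ^ 2 / R ^ 2)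
        (-(χ * (2 * x ^ 1) / R ^ 2)) x := by
      have h1 := ((hasDerivAt_pow 2 x).const_mul χ).div_const (R ^ 2)
      simpa using h1.const_sub (1:ℝ)
    have hune : (1 - χ * x ^ 2 / R ^ 2) ≠ 0 :=
      ne_of_gt (hu_pos x ⟨le_of_lt hx.1, le_of_lt hx.2⟩)
    have hsq := (hu.sqrt hune).div_const 2
    exact (hζ_deriv x hx).add hsq
  -- the derivative is nonnegative
  have hderiv_nonneg : ∀ x ∈ Ioo (0:ℝ) R,
      0 ≤ ζ' x + (-(χ * (2 * x ^ 1) / R ^ 2)) /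
        (2 * Real.sqrt (1 - χ * x ^ 2 / R ^ 2)) / 2 := by
    intro x hx
    have hx0 : 0 < x := hx.1
    have hxR : x < R := hx.2
    set s := Real.sqrt (1 - 2 * m x / x) with hs
    set t := Real.sqrt (1 - χ * x ^ 2 / R ^ 2) with ht
    have hmb := hm_bound x ⟨hx0, le_of_lt hxR⟩
    have hspos : 0 < s := by
      apply Real.sqrt_pos.2
      have : 2 * m x / x < 1 := (div_lt_one hx0).2 hmb.2
      linarith
    have htpos : 0 < t := Real.sqrt_pos.2 (hu_pos x ⟨le_of_lt hx0, le_of_lt hxR⟩)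
    have hst : s ≤ t := by
      apply Real.sqrt_le_sqrt
      have h1 : χ * x ^ 2 / R ^ 2 = 2 * M * x ^ 2 / R ^ 3 := by
        rw [hχ]; field_simp
      have h2 : 2 * M * x ^ 2 / R ^ 3 ≤ 2 * m x / x := by
        rw [div_le_div_iff₀ (by positivity) hx0]
        have := hm_ge x hx
        rw [ge_iff_le, div_le_iff₀ (by positivity : (0:ℝ) < R ^ 3)] at this
        nlinarith
      linarith
    have hζ'x : M / R ^ 3 * x / s ≤ ζ' x := by
      rw [div_le_iff₀ hspos]
      have h := hineq x hx
      have := mul_le_mul_of_nonneg_left h (le_of_lt hx0)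
      calc M / R ^ 3 * x = x * (M / R ^ 3) := by ring
        _ ≤ x * (1 / x * s * ζ' x) := this
        _ = ζ' x * s := by field_simp
    have hMpos : 0 < M := by linarith
    have hts : M / R ^ 3 * x / t ≤ M / R ^ 3 * x / s :=
      div_le_div_of_nonneg_left
        (le_of_lt (mul_pos (div_pos hMpos (pow_pos hR 3)) hx0)) hspos hst
    have heq : (-(χ * (2 * x ^ 1) / R ^ 2)) / (2 * t) / 2 = -(M / R ^ 3 * x / t) := by
      rw [hχ]; field_simp
    rw [heq]
    linarith [le_trans hts hζ'x]
  -- φ is monotone on [0, R]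
  have hmono : MonotoneOn φ (Icc 0 R) := by
    apply monotoneOn_of_deriv_nonneg (convex_Icc 0 R)
    · apply hζ_cont.add
      apply ContinuousOn.div_const
      apply Continuous.continuousOn
      exact (continuous_const.sub ((continuous_const.mul (continuous_pow 2)).div_const _)).sqrt
    · rw [interior_Icc]
      exact fun x hx => ((hderiv x hx).differentiableAt).differentiableWithinAt
    · rw [interior_Icc]
      intro x hx
      rw [(hderiv x hx).deriv]
      exact hderiv_nonneg x hx
  have h0R : φ 0 ≤ φ R := hmono ⟨le_refl 0, le_of_lt hR⟩ ⟨le_of_lt hR, le_refl R⟩ (le_of_lt hR)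
  have hφ0 : φ 0 = ζ 0 + 1 / 2 := by
    simp [hφdef, Real.sqrt_one]
  have hφR : φ R = Real.sqrt (1 - χ) + Real.sqrt (1 - χ) / 2 := by
    have : χ * R ^ 2 / R ^ 2 = χ := by field_simp
    simp [hφdef, this, hζR]
  rw [hφ0, hφR] at h0R
  linarith
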